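/- For every real L > 1 with L not an integer, there exists a continuous function g : [0, T] → ℝ (for any T > 0) with g(0) = 0, g(T) = L, g nondecreasing, such that for all t ∈ [0, T − T/L], g(t + T/L) − g(t) ≠ 1. -/

import Mathlib

lemma sin_sq_lip (a b : ℝ) : |Real.sin a ^ 2 - Real.sin b ^ 2| ≤ 2 * |a - b| := by
  have h1 : |Real.sin a - Real.sin b| ≤ |a - b| := by
    rw [Real.sin_sub_sin, abs_mul, abs_mul]
    have hs : |Real.sin ((a - b) / 2)| ≤ |(a - b) / 2| := Real.abs_sin_le_abs
    have hcb : |Real.cos ((a + b) / 2)| ≤ 1 := Real.abs_cos_le_one _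
    have h2 : |(2:ℝ)| = 2 := by norm_num
    have habs : |(a - b) / 2| = |a - b| / 2 := by rw [abs_div]; norm_num
    rw [h2, mul_assoc]
    have hm : |Real.sin ((a - b) / 2)| * |Real.cos ((a + b) / 2)| ≤ |a - b| / 2 := by
      calc |Real.sin ((a - b) / 2)| * |Real.cos ((a + b) / 2)|
          ≤ |(a - b) / 2| * 1 := mul_le_mul hs hcb (abs_nonneg _) (abs_nonneg _)
        _ = |a - b| / 2 := by rw [habs, mul_one]
    linarith
  have h2 : |Real.sin a + Real.sin b| ≤ 2 := by
    have := abs_add_le (Real.sin a) (Real.sin b)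
    have ha := Real.abs_sin_le_one a
    have hb := Real.abs_sin_le_one b
    linarith
  have heq : Real.sin a ^ 2 - Real.sin b ^ 2 =
      (Real.sin a - Real.sin b) * (Real.sin a + Real.sin b) := by ring
  rw [heq, abs_mul]
  calc |Real.sin a - Real.sin b| * |Real.sin a + Real.sin b|
      ≤ |a - b| * 2 := mul_le_mul h1 h2 (abs_nonneg _) (abs_nonneg _)
    _ = 2 * |a - b| := by ring

theorem race_no_average_mile (L : ℝ) (hL : 1 < L) (hnotint : ∀ n : ℤ, L ≠ n)
    (T : ℝ) (hT : 0 < T) :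
    ∃ g : ℝ → ℝ, ContinuousOn g (Set.Icc 0 T) ∧ g 0 = 0 ∧ g T = L ∧
      MonotoneOn g (Set.Icc 0 T) ∧
      ∀ t ∈ Set.Icc (0 : ℝ) (T - T / L), g (t + T / L) - g t ≠ 1 := by
  have hπ := Real.pi_pos
  have hL0 : (0:ℝ) < L := by linarith
  have hT0 : T ≠ 0 := ne_of_gt hT
  have hLne : L ≠ 0 := ne_of_gt hL0
  set c : ℝ := Real.sin (Real.pi * L) ^ 2 with hc
  have hsne : Real.sin (Real.pi * L) ≠ 0 := by
    intro h
    rcases Real.sin_eq_zero_iff.mp h with ⟨n, hn⟩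
    refine hnotint n ?_
    have hπne : Real.pi ≠ 0 := ne_of_gt hπ
    have : (n : ℝ) * Real.pi = L * Real.pi := by rw [hn]; ring
    have := mul_right_cancel₀ hπne this
    linarith
  have hc0 : 0 < c := by positivity
  refine ⟨fun t => L*t/T + (1/8)*(c*t/T - Real.sin (Real.pi*L*t/T)^2), ?_, ?_, ?_, ?_, ?_⟩
  · apply Continuous.continuousOn
    fun_prop
  · simp
  · have harg : Real.pi*L*T/T = Real.pi*L := by field_simp
    simp only [harg]
    field_simp
    rw [hc, mul_comm Real.pi L]; ring
  · intro s hs t ht hst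
    simp only
    have key := sin_sq_lip (Real.pi*L*t/T) (Real.pi*L*s/T)
    have habs : |Real.pi*L*t/T - Real.pi*L*s/T| = Real.pi*L*(t-s)/T := by
      rw [abs_of_nonneg]
      · ring
      · have he : Real.pi*L*t/T - Real.pi*L*s/T = Real.pi*L/T*(t-s) := by ring
        rw [he]
        apply mul_nonneg (by positivity) (by linarith)
    rw [habs] at key
    have h1 : Real.sin (Real.pi*L*t/T)^2 - Real.sin (Real.pi*L*s/T)^2
        ≤ 2 * (Real.pi*L*(t-s)/T) := le_trans (le_abs_self _) key
    have hts : 0 ≤ t - s := by linarith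
    have h2 : Real.pi*L*(t-s)/T ≤ 4*(L*(t-s)/T) := by
      have hnum : Real.pi*L*(t-s) ≤ 4*L*(t-s) := by
        nlinarith [Real.pi_le_four, mul_nonneg hL0.le hts]
      have := (div_le_div_iff_of_pos_right hT).mpr hnum
      linarith [this, show (4*L*(t-s))/T = 4*(L*(t-s)/T) by ring]
    have e1 : L*t/T = L*s/T + L*(t-s)/T := by ring
    have e2 : c*t/T = c*s/T + c*(t-s)/T := by ring
    have h3 : 0 ≤ c*(t-s)/T := by positivity
    linarith
  · intro t ht
    simp only
    have harg : Real.pi*L*(t+T/L)/T = Real.pi*L*t/T + Real.pi := by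
      field_simp
    rw [harg, Real.sin_add_pi]
    have hval : L*(t+T/L)/T + (1/8)*(c*(t+T/L)/T - (-Real.sin (Real.pi*L*t/T))^2)
        - (L*t/T + (1/8)*(c*t/T - Real.sin (Real.pi*L*t/T)^2)) = 1 + c/(8*L) := by
      field_simp
      ring
    rw [hval]
    have hpos : 0 < c/(8*L) := by positivity
    intro h
    linarith
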